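/- Let L be a divisorial principally generated C-lattice lattice domain and let c ∈ L be nonzero such that (c·z : c) = z for every nonzero principal element z of L. Then c is a principal element. -/

import Mathlib

/-- A multiplicative lattice: a complete lattice (bottom `⊥` playing the role of `0`)
which is a commutative monoid whose identity `1` is the top element, and in which
multiplication distributes over arbitrary joins. -/
class MulLattice (L : Type*) extends CompleteLattice L, CommMonoid L where
  one_eq_top : (1 : L) = ⊤
  mul_sSup : ∀ (a : L) (S : Set L), a * sSup S = ⨆ b ∈ S, a * b

namespace MulLattice

variable {L : Type*} [MulLattice L]

/-- The residual `(y : x) = ⋁ {a | a * x ≤ y}`. -/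
def res (y x : L) : L := sSup {a : L | a * x ≤ y}

/-- `x` is meet-principal: `y ⊓ z * x = ((y : x) ⊓ z) * x` for all `y, z`. -/
def IsMeetPrincipal (x : L) : Prop := ∀ y z : L, y ⊓ z * x = (res y x ⊓ z) * x

/-- `x` is join-principal: `y ⊔ (z : x) = ((y * x ⊔ z) : x)` for all `y, z`. -/
def IsJoinPrincipal (x : L) : Prop := ∀ y z : L, y ⊔ res z x = res (y * x ⊔ z) x

/-- `x` is principal if it is both meet-principal and join-principal. -/
def IsPrincipal (x : L) : Prop := IsMeetPrincipal x ∧ IsJoinPrincipal x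

/-- A prime element: a proper element `p` with `x * y ≤ p → x ≤ p ∨ y ≤ p`. -/
def IsPrime (p : L) : Prop := p ≠ 1 ∧ ∀ x y : L, x * y ≤ p → x ≤ p ∨ y ≤ p

/-- A maximal element: an element maximal in `L - {1}`. -/
def IsMaximal (m : L) : Prop := m ≠ 1 ∧ ∀ b : L, m < b → b = 1

end MulLattice

/-- A principally generated C-lattice: a multiplicative lattice in which `1` is compact,
compact elements are closed under multiplication, every element is a join of compact
elements and every element is a join of principal elements. -/
class PGCLattice (L : Type*) extends MulLattice L where
  top_isCompact : IsCompactElement (⊤ : L)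
  compact_mul : ∀ a b : L, IsCompactElement a →
    IsCompactElement b → IsCompactElement (a * b)
  compactly_generated : ∀ a : L,
    a = sSup {c : L | IsCompactElement c ∧ c ≤ a}
  principally_generated : ∀ a : L,
    a = sSup {x : L | MulLattice.IsPrincipal x ∧ x ≤ a}

namespace MulLattice

variable {L : Type*}

/-- A lattice domain: `0 = ⊥` is a prime element. -/
def IsLatticeDomain (L : Type*) [MulLattice L] : Prop := IsPrime (⊥ : L)

variable [PGCLattice L]

open Classical in
/-- The divisorial (`v`-)closure of `a`: equals `(x : (x : a))` for a nonzero principal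
`x ≤ a` when such an `x` exists (in a lattice domain this is independent of the choice
of `x`), and `⊥` otherwise (in particular `vclos ⊥ = ⊥`). -/
noncomputable def vclos (a : L) : L :=
  if h : ∃ x : L, IsPrincipal x ∧ x ≠ ⊥ ∧ x ≤ a then
    res h.choose (res h.choose a)
  else ⊥

/-- `a` is divisorial if `a = a_v`. -/
def IsDivisorial (a : L) : Prop := vclos a = a

/-- `L` is h-local: every nonzero prime is below a unique maximal element and
every nonzero element is below only finitely many maximal elements. -/
def IsHLocal (L : Type*) [PGCLattice L] : Prop :=
  (∀ r : L, r ≠ ⊥ → IsPrime r → ∃! m : L, IsMaximal m ∧ r ≤ m) ∧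
  (∀ b : L, b ≠ ⊥ → {m : L | IsMaximal m ∧ b ≤ m}.Finite)

end MulLattice

open MulLattice

section StmtAux

open MulLattice

variable {L : Type*} [PGCLattice L]

lemma stmtAux_mul_sup (a b c : L) : a * (b ⊔ c) = a * b ⊔ a * c := by
  have h := MulLattice.mul_sSup a ({b, c} : Set L)
  rw [sSup_pair] at h
  rw [h, iSup_pair]

lemma stmtAux_mul_le_mul_right (a : L) {b c : L} (hbc : b ≤ c) : a * b ≤ a * c := by
  have h : a * c = a * b ⊔ a * c := by rw [← stmtAux_mul_sup, sup_eq_right.mpr hbc]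
  rw [h]; exact le_sup_left

lemma stmtAux_mul_le_mul {a b c d : L} (h1 : a ≤ b) (h2 : c ≤ d) : a * c ≤ b * d := by
  calc a * c ≤ a * d := stmtAux_mul_le_mul_right a h2
    _ = d * a := mul_comm _ _
    _ ≤ d * b := stmtAux_mul_le_mul_right d h1
    _ = b * d := mul_comm _ _

lemma stmtAux_mul_top (a : L) : a * ⊤ = a := by
  rw [← MulLattice.one_eq_top, mul_one]

lemma stmtAux_mul_le_right (a b : L) : a * b ≤ a := by
  calc a * b ≤ a * ⊤ := stmtAux_mul_le_mul_right a le_top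
    _ = a := stmtAux_mul_top a

lemma stmtAux_res_mul_le (y x : L) : res y x * x ≤ y := by
  rw [mul_comm, MulLattice.res, MulLattice.mul_sSup]
  exact iSup₂_le fun b hb => by rw [mul_comm]; exact hb

lemma stmtAux_le_res {a y x : L} : a ≤ res y x ↔ a * x ≤ y :=
  ⟨fun h => le_trans (stmtAux_mul_le_mul h le_rfl) (stmtAux_res_mul_le y x),
   fun h => le_sSup h⟩

lemma stmtAux_res_mono {y y' : L} (x : L) (h : y ≤ y') : res y x ≤ res y' x :=
  stmtAux_le_res.mpr (le_trans (stmtAux_res_mul_le y x) h)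

lemma stmtAux_res_mul (y p q : L) : res y (p * q) = res (res y p) q := by
  apply le_antisymm
  · rw [stmtAux_le_res, stmtAux_le_res, mul_assoc, mul_comm q p]
    exact stmtAux_res_mul_le y (p * q)
  · rw [stmtAux_le_res]
    have e1 : res (res y p) q * (p * q) = (res (res y p) q * q) * p := by
      rw [mul_comm p q, ← mul_assoc]
    rw [e1]
    calc (res (res y p) q * q) * p ≤ res y p * p :=
          stmtAux_mul_le_mul (stmtAux_res_mul_le _ _) le_rfl
      _ ≤ y := stmtAux_res_mul_le _ _

lemma stmtAux_eq_bot_of_mul (hL : IsLatticeDomain L) {a b : L} (hb : b ≠ ⊥)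
    (hab : a * b ≤ ⊥) : a = ⊥ := by
  rcases hL.2 a b hab with h' | h'
  · exact le_bot_iff.mp h'
  · exact absurd (le_bot_iff.mp h') hb

lemma stmtAux_mul_ne_bot (hL : IsLatticeDomain L) {a b : L} (ha : a ≠ ⊥) (hb : b ≠ ⊥) :
    a * b ≠ ⊥ := fun hab => ha (stmtAux_eq_bot_of_mul hL hb (le_of_eq hab))

lemma stmtAux_res_bot (hL : IsLatticeDomain L) {x : L} (hx : x ≠ ⊥) :
    res (⊥ : L) x = ⊥ :=
  le_antisymm (sSup_le fun b hb => le_of_eq (stmtAux_eq_bot_of_mul hL hx hb)) bot_le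

lemma stmtAux_res_mul_self (hL : IsLatticeDomain L) {x : L} (hx : IsPrincipal x)
    (hxb : x ≠ ⊥) (a : L) : res (a * x) x = a := by
  have hj := hx.2 a ⊥
  rw [stmtAux_res_bot hL hxb] at hj
  simp only [sup_bot_eq] at hj
  exact hj.symm

lemma stmtAux_wmp {x : L} (hx : IsPrincipal x) {w : L} (hw : w ≤ x) :
    res w x * x = w := by
  have hm := hx.1 w ⊤
  have ht : (⊤ : L) * x = x := by rw [mul_comm]; exact stmtAux_mul_top x
  rw [ht, inf_eq_left.mpr hw, inf_top_eq] at hm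
  exact hm.symm

lemma stmtAux_exists_principal {a : L} (ha : a ≠ ⊥) :
    ∃ p : L, IsPrincipal p ∧ p ≠ ⊥ ∧ p ≤ a := by
  by_contra hcon
  push_neg at hcon
  apply ha
  apply le_bot_iff.mp
  calc a = sSup {x : L | IsPrincipal x ∧ x ≤ a} := PGCLattice.principally_generated a
    _ ≤ ⊥ := sSup_le fun p hp => by
        rcases eq_or_ne p ⊥ with hb | hb
        · exact le_of_eq hb
        · exact absurd hp.2 (hcon p hp.1 hb)

lemma stmtAux_E (hL : IsLatticeDomain L) {a x y : L}
    (hx : IsPrincipal x) (hxb : x ≠ ⊥) (hy : IsPrincipal y) (hyb : y ≠ ⊥)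
    (hxa : x ≤ a) (hya : y ≤ a) :
    y * res x a ≤ x * res y a := by
  have hpg := PGCLattice.principally_generated (res x a)
  rw [hpg, MulLattice.mul_sSup]
  apply iSup₂_le
  intro e he
  obtain ⟨hep, hea⟩ := he
  have heax : e * a ≤ x := stmtAux_le_res.mp hea
  have h1 : y * e ≤ x := by
    calc y * e ≤ a * e := stmtAux_mul_le_mul hya le_rfl
      _ = e * a := mul_comm _ _
      _ ≤ x := heax
  have h2 : res (y * e) x * x = y * e := stmtAux_wmp hx h1
  have h3 : res (y * e) x * a ≤ y := by
    have h4 : (res (y * e) x * a) * x ≤ y * x := by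
      have e1 : (res (y * e) x * a) * x = a * (res (y * e) x * x) := by
        rw [mul_comm (res (y * e) x) a, mul_assoc]
      rw [e1, h2]
      calc a * (y * e) = y * (a * e) := mul_left_comm a y e
        _ = y * (e * a) := by rw [mul_comm a e]
        _ ≤ y * x := stmtAux_mul_le_mul_right y heax
    have h5 := stmtAux_le_res.mpr h4
    rwa [stmtAux_res_mul_self hL hx hxb y] at h5
  calc y * e = res (y * e) x * x := h2.symm
    _ = x * res (y * e) x := mul_comm _ _
    _ ≤ x * res y a := stmtAux_mul_le_mul_right x (stmtAux_le_res.mpr h3)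

lemma stmtAux_indep_le (hL : IsLatticeDomain L) {a x y : L}
    (hx : IsPrincipal x) (hxb : x ≠ ⊥) (hy : IsPrincipal y) (hyb : y ≠ ⊥)
    (hxa : x ≤ a) (hya : y ≤ a) :
    res y (res y a) ≤ res x (res x a) := by
  rw [stmtAux_le_res]
  have key : (res y (res y a) * res x a) * y ≤ x * y := by
    calc (res y (res y a) * res x a) * y = res y (res y a) * (y * res x a) := by
          rw [mul_assoc, mul_comm (res x a) y]
      _ ≤ res y (res y a) * (x * res y a) :=
          stmtAux_mul_le_mul_right _ (stmtAux_E hL hx hxb hy hyb hxa hya)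
      _ = x * (res y (res y a) * res y a) := mul_left_comm _ _ _
      _ ≤ x * y := stmtAux_mul_le_mul_right x (stmtAux_res_mul_le y (res y a))
  have h5 := stmtAux_le_res.mpr key
  rwa [stmtAux_res_mul_self hL hy hyb x] at h5

lemma stmtAux_vclos_eq (hL : IsLatticeDomain L) (hdiv : ∀ a : L, IsDivisorial a)
    {a x : L} (hx : IsPrincipal x) (hxb : x ≠ ⊥) (hxa : x ≤ a) :
    res x (res x a) = a := by
  have hex : ∃ z : L, IsPrincipal z ∧ z ≠ ⊥ ∧ z ≤ a := ⟨x, hx, hxb, hxa⟩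
  have h1 : vclos a = a := hdiv a
  unfold MulLattice.vclos at h1
  rw [dif_pos hex] at h1
  obtain ⟨hzp, hzb, hza⟩ := hex.choose_spec
  have h2 : res x (res x a) = res hex.choose (res hex.choose a) :=
    le_antisymm (stmtAux_indep_le hL hzp hzb hx hxb hza hxa)
      (stmtAux_indep_le hL hx hxb hzp hzb hxa hza)
  rw [h2, h1]

lemma stmtAux_prin_mul {p q : L} (hp : IsPrincipal p) (hq : IsPrincipal q) :
    IsPrincipal (p * q) := by
  constructor
  · intro y z
    have e1 : z * (p * q) = (z * q) * p := by rw [mul_comm p q, ← mul_assoc]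
    rw [e1, hp.1 y (z * q), hq.1 (res y p) z, ← stmtAux_res_mul y p q]
    rw [mul_assoc, mul_comm q p]
  · intro y z
    rw [stmtAux_res_mul z p q, stmtAux_res_mul (y * (p * q) ⊔ z) p q]
    rw [hq.2 y (res z p)]
    congr 1
    rw [hp.2 (y * q) z]
    congr 2
    rw [mul_assoc, mul_comm q p]

lemma stmtAux_principal_of_inv (hL : IsLatticeDomain L) {x b c : L}
    (hx : IsPrincipal x) (hxb : x ≠ ⊥) (hbc : b * c = x) : IsPrincipal c := by
  constructor
  · intro y z
    apply le_antisymm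
    · have h1 : (y ⊓ z * c) * b ≤ y * b := stmtAux_mul_le_mul inf_le_left le_rfl
      have h2 : (y ⊓ z * c) * b ≤ z * x := by
        calc (y ⊓ z * c) * b ≤ (z * c) * b := stmtAux_mul_le_mul inf_le_right le_rfl
          _ = z * (b * c) := by rw [mul_assoc, mul_comm c b]
          _ = z * x := by rw [hbc]
      have h3 : (y ⊓ z * c) * b ≤ (res (y * b) x ⊓ z) * x := by
        rw [← hx.1 (y * b) z]; exact le_inf h1 h2
      have h5 : (y ⊓ z * c) * x ≤ ((res (y * b) x ⊓ z) * c) * x := by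
        calc (y ⊓ z * c) * x = ((y ⊓ z * c) * b) * c := by rw [mul_assoc, hbc]
          _ ≤ ((res (y * b) x ⊓ z) * x) * c := stmtAux_mul_le_mul h3 le_rfl
          _ = ((res (y * b) x ⊓ z) * c) * x := by
              rw [mul_assoc, mul_comm x c, ← mul_assoc]
      have h6 : y ⊓ z * c ≤ (res (y * b) x ⊓ z) * c := by
        have hh := stmtAux_le_res.mpr h5
        rwa [stmtAux_res_mul_self hL hx hxb] at hh
      have h7 : res (y * b) x ≤ res y c := by
        rw [stmtAux_le_res]
        have h8 : (res (y * b) x * c) * x ≤ y * x := by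
          calc (res (y * b) x * c) * x = (res (y * b) x * x) * c := by
                rw [mul_assoc, mul_comm c x, ← mul_assoc]
            _ ≤ (y * b) * c := stmtAux_mul_le_mul (stmtAux_res_mul_le _ _) le_rfl
            _ = y * x := by rw [mul_assoc, hbc]
        have hh := stmtAux_le_res.mpr h8
        rwa [stmtAux_res_mul_self hL hx hxb] at hh
      calc y ⊓ z * c ≤ (res (y * b) x ⊓ z) * c := h6
        _ ≤ (res y c ⊓ z) * c := stmtAux_mul_le_mul (inf_le_inf_right z h7) le_rfl
    · apply le_inf
      · calc (res y c ⊓ z) * c ≤ res y c * c := stmtAux_mul_le_mul inf_le_left le_rfl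
          _ ≤ y := stmtAux_res_mul_le y c
      · exact stmtAux_mul_le_mul inf_le_right le_rfl
  · intro y z
    apply le_antisymm
    · apply sup_le
      · exact stmtAux_le_res.mpr le_sup_left
      · exact stmtAux_res_mono c le_sup_right
    · have hdc : res (y * c ⊔ z) c * c ≤ y * c ⊔ z := stmtAux_res_mul_le _ _
      have h1 : res (y * c ⊔ z) c * x ≤ y * x ⊔ z * b := by
        calc res (y * c ⊔ z) c * x = (res (y * c ⊔ z) c * c) * b := by
              rw [← hbc, mul_comm b c, ← mul_assoc]
          _ ≤ (y * c ⊔ z) * b := stmtAux_mul_le_mul hdc le_rfl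
          _ = (y * c) * b ⊔ z * b := by
              rw [mul_comm _ b, stmtAux_mul_sup, mul_comm b (y * c), mul_comm b z]
          _ = y * x ⊔ z * b := by rw [mul_assoc, mul_comm c b, hbc]
      have h2 : res (y * c ⊔ z) c ≤ y ⊔ res (z * b) x := by
        rw [hx.2 y (z * b)]
        exact stmtAux_le_res.mpr h1
      have h3 : res (z * b) x ≤ res z c := by
        rw [stmtAux_le_res]
        have h8 : (res (z * b) x * c) * x ≤ z * x := by
          calc (res (z * b) x * c) * x = (res (z * b) x * x) * c := by
                rw [mul_assoc, mul_comm c x, ← mul_assoc]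
            _ ≤ (z * b) * c := stmtAux_mul_le_mul (stmtAux_res_mul_le _ _) le_rfl
            _ = z * x := by rw [mul_assoc, hbc]
        have hh := stmtAux_le_res.mpr h8
        rwa [stmtAux_res_mul_self hL hx hxb] at hh
      calc res (y * c ⊔ z) c ≤ y ⊔ res (z * b) x := h2
        _ ≤ y ⊔ res z c := sup_le_sup_left h3 y

end StmtAux

theorem stmt16 {L : Type*} [PGCLattice L] (hL : IsLatticeDomain L)
    (hdiv : ∀ a : L, IsDivisorial a)
    (c : L) (hc : c ≠ ⊥)
    (h : ∀ z : L, z ≠ ⊥ → IsPrincipal z → res (c * z) c = z) :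
    IsPrincipal c := by
  obtain ⟨x, hx, hxb, hxc⟩ := stmtAux_exists_principal hc
  have hbcx : res x c * c ≤ x := stmtAux_res_mul_le x c
  have hxble : x ≤ res x c := stmtAux_le_res.mpr (stmtAux_mul_le_right x c)
  have hgx : res (res x c * c) x * x = res x c * c := stmtAux_wmp hx hbcx
  have hHg : res x (res (res x c * c) x) * res (res x c * c) x ≤ x :=
    stmtAux_res_mul_le x (res (res x c * c) x)
  have hxx : IsPrincipal (x * x) := stmtAux_prin_mul hx hx
  have hxxb : (x * x) ≠ ⊥ := stmtAux_mul_ne_bot hL hxb hxb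
  have hbb : res x c ≠ ⊥ := fun hb => hxb (le_bot_iff.mp (hb ▸ hxble))
  have hxxle_xc : x * x ≤ x * c := stmtAux_mul_le_mul_right x hxc
  have hxxle_bc : x * x ≤ res x c * c := stmtAux_mul_le_mul hxble hxc
  -- Step 5 : res (x*x) (x*c) = res x c
  have h5 : res (x * x) (x * c) = res x c := by
    apply le_antisymm
    · rw [stmtAux_le_res]
      have k1 : (res (x * x) (x * c) * c) * x ≤ x * x := by
        calc (res (x * x) (x * c) * c) * x = res (x * x) (x * c) * (x * c) := by
              rw [mul_assoc, mul_comm c x]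
          _ ≤ x * x := stmtAux_res_mul_le _ _
      have hh := stmtAux_le_res.mpr k1
      rwa [stmtAux_res_mul_self hL hx hxb] at hh
    · rw [stmtAux_le_res]
      calc res x c * (x * c) = (res x c * c) * x := by rw [mul_comm x c, ← mul_assoc]
        _ ≤ x * x := stmtAux_mul_le_mul hbcx le_rfl
  -- divisoriality of x*c at base x*x
  have h5' : x * c = res (x * x) (res x c) := by
    have hv := stmtAux_vclos_eq hL hdiv hxx hxxb hxxle_xc
    rw [h5] at hv
    exact hv.symm
  -- Step 6 : H*c ≤ x*c
  have h6 : res x (res (res x c * c) x) * c ≤ x * c := by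
    rw [h5', stmtAux_le_res]
    calc (res x (res (res x c * c) x) * c) * res x c
        = res x (res (res x c * c) x) * (res x c * c) := by
          rw [mul_assoc, mul_comm c (res x c)]
      _ = res x (res (res x c * c) x) * (res (res x c * c) x * x) :=
          congrArg (fun w => res x (res (res x c * c) x) * w) hgx.symm
      _ = (res x (res (res x c * c) x) * res (res x c * c) x) * x :=
          (mul_assoc _ _ _).symm
      _ ≤ x * x := stmtAux_mul_le_mul hHg le_rfl
  -- Step 7 : H ≤ x, using the hypothesis h
  have h7 : res x (res (res x c * c) x) ≤ x := by
    have hxcancel := h x hxb hx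
    have hle : res x (res (res x c * c) x) ≤ res (c * x) c := by
      rw [stmtAux_le_res]
      calc res x (res (res x c * c) x) * c ≤ x * c := h6
        _ = c * x := mul_comm _ _
    rwa [hxcancel] at hle
  -- Step 8 : res (x*x) (res x c * c) = H
  have h8 : res (x * x) (res x c * c) = res x (res (res x c * c) x) := by
    apply le_antisymm
    · rw [stmtAux_le_res]
      have k1 : (res (x * x) (res x c * c) * res (res x c * c) x) * x ≤ x * x := by
        calc (res (x * x) (res x c * c) * res (res x c * c) x) * x
            = res (x * x) (res x c * c) * (res (res x c * c) x * x) :=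
              mul_assoc _ _ _
          _ = res (x * x) (res x c * c) * (res x c * c) :=
              congrArg (fun w => res (x * x) (res x c * c) * w) hgx
          _ ≤ x * x := stmtAux_res_mul_le _ _
      have hh := stmtAux_le_res.mpr k1
      rwa [stmtAux_res_mul_self hL hx hxb] at hh
    · rw [stmtAux_le_res]
      calc res x (res (res x c * c) x) * (res x c * c)
          = res x (res (res x c * c) x) * (res (res x c * c) x * x) :=
            congrArg (fun w => res x (res (res x c * c) x) * w) hgx.symm
        _ = (res x (res (res x c * c) x) * res (res x c * c) x) * x :=
            (mul_assoc _ _ _).symm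
        _ ≤ x * x := stmtAux_mul_le_mul hHg le_rfl
  have h8' : res x c * c = res (x * x) (res x (res (res x c * c) x)) := by
    have hv := stmtAux_vclos_eq hL hdiv hxx hxxb hxxle_bc
    rw [h8] at hv
    exact hv.symm
  -- Step 9 : res x c * c = x
  have h9 : res x c * c = x := by
    apply le_antisymm hbcx
    rw [h8', stmtAux_le_res]
    exact stmtAux_mul_le_mul_right x h7
  exact stmtAux_principal_of_inv hL hx hxb h9
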